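/- Let T be a bounded linear operator on a complex Hilbert space H, let M be a closed T-invariant subspace, and write T as the upper triangular operator matrix with diagonal (A₁, A₂) relative to H = M ⊕ M^⊥, where A₁ = T|_M and A₂ is the compression of T to M^⊥. If σ_w(A₁) ∪ σ_w(A₂) ⊆ σ_w(T), then σ(T) = σ(A₁) ∪ σ(A₂). -/

import Mathlib

open Metric Filter NormedSpace
open scoped Classical ENNReal

variable {X : Type*} [NormedAddCommGroup X] [NormedSpace ℂ X]

/-- The restriction of `T` to an invariant subspace `M`, as an operator on `M`. -/
def restrictCLM (T : X →L[ℂ] X) (M : Submodule ℂ X) (hM : ∀ x ∈ M, T x ∈ M) :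
    M →L[ℂ] M :=
  { toLinearMap := (T : X →ₗ[ℂ] X).restrict hM
    cont := Continuous.subtype_mk (T.continuous.comp continuous_subtype_val) _ }

/-- `T` is Fredholm: closed range, finite-dimensional kernel and cokernel. -/
def IsFredholm (T : X →L[ℂ] X) : Prop :=
  IsClosed (LinearMap.range (T : X →ₗ[ℂ] X) : Set X) ∧
    FiniteDimensional ℂ (LinearMap.ker (T : X →ₗ[ℂ] X)) ∧ FiniteDimensional ℂ (X ⧸ LinearMap.range (T : X →ₗ[ℂ] X))

/-- `T` is Weyl: Fredholm of index zero. -/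
def IsWeyl (T : X →L[ℂ] X) : Prop :=
  IsFredholm T ∧
    Module.finrank ℂ (LinearMap.ker (T : X →ₗ[ℂ] X)) = Module.finrank ℂ (X ⧸ LinearMap.range (T : X →ₗ[ℂ] X))

/-- The Weyl spectrum `σ_w(T) = {lam ∈ σ(T) : T - lam is not Fredholm of index 0}`. -/
def weylSpectrum (T : X →L[ℂ] X) : Set ℂ :=
  {lam : ℂ | lam ∈ spectrum ℂ T ∧ ¬ IsWeyl (T - lam • 1)}

/-- The compression of `T` to the orthogonal complement `Mᗮ` of a closed subspace `M`
of a Hilbert space: `A₂ = P_{Mᗮ} T |_{Mᗮ}`, the second diagonal entry of the upper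
triangular operator matrix of `T` relative to `H = M ⊕ Mᗮ`. -/
noncomputable def compressionPerp {H : Type*} [NormedAddCommGroup H]
    [InnerProductSpace ℂ H] [CompleteSpace H] (T : H →L[ℂ] H) (M : Submodule ℂ H)
    (hM : IsClosed (M : Set H)) : Mᗮ →L[ℂ] Mᗮ :=
  haveI : CompleteSpace M := hM.completeSpace_coe
  (Submodule.orthogonalProjectionOnto Mᗮ).comp (T.comp Mᗮ.subtypeL)

/-- An injective, non-surjective operator is not Weyl. -/
lemma not_isWeyl_of_inj_not_surj {f : X →L[ℂ] X} (hi : Function.Injective f)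
    (hs : ¬ Function.Surjective f) : ¬ IsWeyl f := by
  rintro ⟨⟨-, hk, hq⟩, heq⟩
  have h1 : LinearMap.ker (f : X →ₗ[ℂ] X) = ⊥ := LinearMap.ker_eq_bot.2 hi
  rw [h1, finrank_bot] at heq
  have : Subsingleton (X ⧸ LinearMap.range (f : X →ₗ[ℂ] X)) := Module.finrank_zero_iff.1 heq.symm
  exact hs (LinearMap.range_eq_top.1 (Submodule.Quotient.subsingleton_iff.1 this))

/-- A surjective, non-injective operator is not Weyl. -/
lemma not_isWeyl_of_surj_not_inj {f : X →L[ℂ] X} (hs : Function.Surjective f)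
    (hi : ¬ Function.Injective f) : ¬ IsWeyl f := by
  rintro ⟨⟨-, hk, hq⟩, heq⟩
  have h1 : LinearMap.range (f : X →ₗ[ℂ] X) = ⊤ := LinearMap.range_eq_top.2 hs
  have : Subsingleton (X ⧸ LinearMap.range (f : X →ₗ[ℂ] X)) := by
    rw [Submodule.Quotient.subsingleton_iff]; exact h1
  have h2 : Module.finrank ℂ (X ⧸ LinearMap.range (f : X →ₗ[ℂ] X)) = 0 := Module.finrank_zero_iff.2 this
  rw [h2] at heq
  have : Subsingleton (LinearMap.ker (f : X →ₗ[ℂ] X)) := Module.finrank_zero_iff.1 heq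
  have h3 : LinearMap.ker (f : X →ₗ[ℂ] X) = ⊥ := by
    rw [Submodule.eq_bot_iff]
    intro x hx
    have := Subsingleton.elim (⟨x, hx⟩ : LinearMap.ker (f : X →ₗ[ℂ] X)) 0
    simpa using congrArg Subtype.val this
  exact hi (LinearMap.ker_eq_bot.1 h3)

lemma isUnit_of_bijective [CompleteSpace X] {f : X →L[ℂ] X} (h : Function.Bijective f) :
    IsUnit f := by
  let e := ContinuousLinearEquiv.ofBijective f (LinearMap.ker_eq_bot.2 h.1)
    (LinearMap.range_eq_top.2 h.2)
  have hef : ⇑e = ⇑f := ContinuousLinearEquiv.coeFn_ofBijective f _ _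
  refine ⟨⟨f, e.symm.toContinuousLinearMap, ?_, ?_⟩, rfl⟩
  · ext x
    simp only [ContinuousLinearMap.mul_apply, ContinuousLinearMap.one_apply,
      ContinuousLinearEquiv.coe_coe]
    rw [← hef]; exact e.apply_symm_apply x
  · ext x
    simp only [ContinuousLinearMap.mul_apply, ContinuousLinearMap.one_apply,
      ContinuousLinearEquiv.coe_coe]
    rw [← hef]; exact e.symm_apply_apply x

lemma bijective_of_isUnit {f : X →L[ℂ] X} (h : IsUnit f) : Function.Bijective f := by
  obtain ⟨⟨a, b, hab, hba⟩, rfl⟩ := h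
  constructor
  · intro x y hxy
    have := congrArg (⇑b) hxy
    simpa [← ContinuousLinearMap.mul_apply, hba] using this
  · intro y
    exact ⟨b y, by simp [← ContinuousLinearMap.mul_apply, hab]⟩

lemma not_mem_spectrum_iff_bijective [CompleteSpace X] {f : X →L[ℂ] X} {lam : ℂ} :
    lam ∉ spectrum ℂ f ↔ Function.Bijective (f - lam • (1 : X →L[ℂ] X)) := by
  rw [spectrum.notMem_iff]
  constructor
  · intro h
    have h' : IsUnit (f - lam • 1) := by
      have := h.neg
      rwa [neg_sub, Algebra.algebraMap_eq_smul_one] at this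
    exact bijective_of_isUnit h'
  · intro h
    have := (isUnit_of_bijective h).neg
    rwa [neg_sub, ← Algebra.algebraMap_eq_smul_one] at this

/-- Let `T` be an operator on a complex Hilbert space, `M` a closed `T`-invariant
subspace, and let `(A₁, A₂)` be the diagonal of the upper triangular operator matrix
of `T` relative to `H = M ⊕ Mᗮ` (`A₁ = T|_M`, `A₂` the compression of `T` to `Mᗮ`).
If `σ_w(A₁) ∪ σ_w(A₂) ⊆ σ_w(T)` then `σ(T) = σ(A₁) ∪ σ(A₂)`. -/
theorem spectrum_eq_union_of_weyl_union_subset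
    {H : Type*} [NormedAddCommGroup H] [InnerProductSpace ℂ H] [CompleteSpace H]
    (T : H →L[ℂ] H) (M : Submodule ℂ H) (hMc : IsClosed (M : Set H))
    (hMi : ∀ x ∈ M, T x ∈ M)
    (hw : weylSpectrum (restrictCLM T M hMi) ∪ weylSpectrum (compressionPerp T M hMc) ⊆
      weylSpectrum T) :
    spectrum ℂ T =
      spectrum ℂ (restrictCLM T M hMi) ∪ spectrum ℂ (compressionPerp T M hMc) := by
  haveI : CompleteSpace M := hMc.completeSpace_coe
  set A₁ := restrictCLM T M hMi with hA₁
  set A₂ := compressionPerp T M hMc with hA₂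
  set P := Submodule.orthogonalProjectionOnto Mᗮ with hP
  ext lam
  set S := T - lam • (1 : H →L[ℂ] H) with hS
  set S₁ := A₁ - lam • (1 : M →L[ℂ] M) with hS₁
  set S₂ := A₂ - lam • (1 : Mᗮ →L[ℂ] Mᗮ) with hS₂
  -- basic pointwise identities
  have coeS₁ : ∀ x : M, ((S₁ x : M) : H) = S (x : H) := by
    intro x
    simp only [hS₁, hS, ContinuousLinearMap.sub_apply, ContinuousLinearMap.smul_apply,
      ContinuousLinearMap.one_apply, Submodule.coe_sub, Submodule.coe_smul]
    rfl
  have hSM : ∀ x ∈ M, S x ∈ M := by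
    intro x hx
    simp only [hS, ContinuousLinearMap.sub_apply, ContinuousLinearMap.smul_apply,
      ContinuousLinearMap.one_apply]
    exact M.sub_mem (hMi x hx) (M.smul_mem _ hx)
  have hPzero : ∀ u : H, u ∈ M → P u = 0 := by
    intro u hu
    exact Submodule.orthogonalProjectionOnto_apply_of_mem_orthogonal
      (M.le_orthogonal_orthogonal hu)
  have hPker : ∀ u : H, P u = 0 → u ∈ M := by
    intro u hu
    have : u ∈ Mᗮᗮ := Submodule.orthogonalProjectionOnto_eq_zero_iff.1 hu
    rwa [Submodule.orthogonal_orthogonal] at this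
  have hS₂eq : ∀ y : Mᗮ, S₂ y = P (S (y : H)) := by
    intro y
    have h1 : S (y : H) = T (y : H) - lam • (y : H) := by
      simp [hS, ContinuousLinearMap.sub_apply]
    have h2 : P ((y : H)) = y := Submodule.orthogonalProjectionOnto_mem_subspace_eq_self y
    rw [h1, map_sub, map_smul, h2]
    rfl
  constructor
  · -- σ(T) ⊆ σ(A₁) ∪ σ(A₂)
    intro hlam
    by_contra hcon
    simp only [Set.mem_union, not_or] at hcon
    obtain ⟨h1, h2⟩ := hcon
    have hb₁ : Function.Bijective S₁ := not_mem_spectrum_iff_bijective.1 h1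
    have hb₂ : Function.Bijective S₂ := not_mem_spectrum_iff_bijective.1 h2
    have hb : Function.Bijective S := by
      constructor
      · -- injective
        refine (LinearMap.ker_eq_bot (f := (S : H →ₗ[ℂ] H))).1 ?_; rw [Submodule.eq_bot_iff]
        intro z hz
        have hz0 : S z = 0 := hz
        set x : M := Submodule.orthogonalProjectionOnto M z with hx
        set y : Mᗮ := P z with hy
        have hdec : (x : H) + (y : H) = z :=
          M.starProjection_add_starProjection_orthogonal z
        have hy0 : S₂ y = 0 := by
          rw [hS₂eq y]
          have : S (y : H) = S z - S (x : H) := by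
            rw [← map_sub]; congr 1; rw [← hdec]; abel
          rw [this, map_sub, hz0, map_zero, zero_sub, hPzero _ (hSM _ x.2), neg_zero]
        have hyz : y = 0 := by
          have := hb₂.1 (by rw [hy0, map_zero] : S₂ y = S₂ 0); exact this
        have hx0 : S₁ x = 0 := by
          apply Subtype.ext
          rw [coeS₁ x]
          have : (x : H) = z := by rw [← hdec, hyz]; simp
          rw [this, hz0]; rfl
        have hxz : x = 0 := hb₁.1 (by rw [hx0, map_zero] : S₁ x = S₁ 0)
        rw [← hdec, hxz, hyz]; simp
      · -- surjective
        intro w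
        obtain ⟨y, hy⟩ := hb₂.2 (P w)
        have hyH : P (S (y : H)) = P w := by rw [← hS₂eq y, hy]
        have hm : w - S (y : H) ∈ M := by
          apply hPker
          rw [map_sub, hyH, sub_self]
        obtain ⟨x, hx⟩ := hb₁.2 ⟨w - S (y : H), hm⟩
        refine ⟨(x : H) + (y : H), ?_⟩
        have hxH : S (x : H) = w - S (y : H) := by
          rw [← coeS₁ x, hx]
        rw [map_add, hxH]
        abel
    exact (not_mem_spectrum_iff_bijective.2 hb) hlam
  · -- σ(A₁) ∪ σ(A₂) ⊆ σ(T)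
    intro hlam
    by_contra hT
    have hb : Function.Bijective S := not_mem_spectrum_iff_bijective.1 hT
    -- S₁ is injective
    have hS₁inj : Function.Injective S₁ := by
      intro a b hab
      have : S (a : H) = S (b : H) := by
        rw [← coeS₁ a, ← coeS₁ b, hab]
      exact Subtype.ext (hb.1 this)
    -- S₂ is surjective
    have hS₂surj : Function.Surjective S₂ := by
      intro v
      obtain ⟨z, hz⟩ := hb.2 (v : H)
      set y : Mᗮ := P z with hy
      refine ⟨y, ?_⟩
      set x : M := Submodule.orthogonalProjectionOnto M z with hx
      have hdec : (x : H) + (y : H) = z :=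
        M.starProjection_add_starProjection_orthogonal z
      rw [hS₂eq y]
      have h1 : S (y : H) = S z - S (x : H) := by
        rw [← map_sub]; congr 1; rw [← hdec]; abel
      rw [h1, map_sub, hz, hPzero _ (hSM _ x.2), sub_zero]
      exact Submodule.orthogonalProjectionOnto_mem_subspace_eq_self v
    rcases hlam with h1 | h1
    · -- lam ∈ σ(A₁): S₁ injective but not bijective, so not surjective, so not Weyl
      have hnb : ¬ Function.Bijective S₁ := fun h => not_mem_spectrum_iff_bijective.2 h h1
      have hns : ¬ Function.Surjective S₁ := fun h => hnb ⟨hS₁inj, h⟩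
      have : lam ∈ weylSpectrum A₁ := ⟨h1, not_isWeyl_of_inj_not_surj hS₁inj hns⟩
      exact hT (hw (Or.inl this)).1
    · have hnb : ¬ Function.Bijective S₂ := fun h => not_mem_spectrum_iff_bijective.2 h h1
      have hni : ¬ Function.Injective S₂ := fun h => hnb ⟨h, hS₂surj⟩
      have : lam ∈ weylSpectrum A₂ := ⟨h1, not_isWeyl_of_surj_not_inj hS₂surj hni⟩
      exact hT (hw (Or.inr this)).1
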